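/- Let G ⊂ ℝⁿ be bounded open, f ∈ C¹ on a neighborhood of closure(G), ψ : ℝⁿ → ℝ Borel measurable and bounded with support avoiding f(∂G). Then ∫_G J_f(x)·ψ(f(x)) dx = ∫_{ℝⁿ} deg(f, G, y)·ψ(y) dy. -/

import Mathlib

open MeasureTheory Set

/-- Change of variables via the degree for `C¹` maps: if `G` is bounded open, `f` is `C¹`
on a neighborhood of `closure G`, and `ψ` is a bounded Borel function whose support avoids
`f(∂G)`, then `∫_G J_f(x)ψ(f(x)) dx = ∫_{ℝⁿ} deg(f,G,y)ψ(y) dy`. Here `deg` is the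
Brouwer degree, characterized at regular values by the sum of the signs of the Jacobian
over the (finite) preimage set. -/
theorem stmt17 (n : ℕ) (hn : 2 ≤ n) (G : Set (Fin n → ℝ)) (hG : IsOpen G)
    (hGb : Bornology.IsBounded G)
    (f : (Fin n → ℝ) → (Fin n → ℝ))
    (hf : ∃ V : Set (Fin n → ℝ), IsOpen V ∧ closure G ⊆ V ∧ ContDiffOn ℝ 1 f V)
    (ψ : (Fin n → ℝ) → ℝ) (hψm : Measurable ψ) (hψb : ∃ M : ℝ, ∀ y, |ψ y| ≤ M)
    (hψsupp : ∀ y, ψ y ≠ 0 → y ∉ f '' frontier G)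
    (deg : (Fin n → ℝ) → ℤ)
    (hdeg : ∀ y : Fin n → ℝ, y ∉ f '' frontier G →
      (∀ x ∈ closure G, f x = y → LinearMap.det (fderiv ℝ f x).toLinearMap ≠ 0) →
      ∃ S : Finset (Fin n → ℝ), (↑S = {x ∈ G | f x = y}) ∧
        deg y = ∑ x ∈ S, (SignType.sign (LinearMap.det (fderiv ℝ f x).toLinearMap) : ℤ)) :
    ∫ x in G, LinearMap.det (fderiv ℝ f x).toLinearMap * ψ (f x) =
      ∫ y, (deg y : ℝ) * ψ y := by
  classical
  obtain ⟨V, hVo, hGV, hfV⟩ := hf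
  obtain ⟨M, hM⟩ := hψb
  have hM0 : 0 ≤ M := le_trans (abs_nonneg _) (hM 0)
  have hEdef : True := trivial
  -- The Jacobian determinant
  set D : (Fin n → ℝ) → ℝ := fun x => (fderiv ℝ f x).det with hDdef
  have hDeq : ∀ x : Fin n → ℝ, LinearMap.det (fderiv ℝ f x).toLinearMap = D x := fun x => rfl
  -- differentiability facts
  have hdiff : ∀ x ∈ V, HasFDerivAt f (fderiv ℝ f x) x := fun x hx =>
    ((hfV.differentiableOn one_ne_zero).differentiableAt (hVo.mem_nhds hx)).hasFDerivAt
  have hder : ∀ s : Set (Fin n → ℝ), s ⊆ V → ∀ x ∈ s, HasFDerivWithinAt f (fderiv ℝ f x) s x :=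
    fun s hs x hx => (hdiff x (hs hx)).hasFDerivWithinAt
  have hGV' : G ⊆ V := subset_closure.trans hGV
  have hfcont : ContinuousOn f V := hfV.continuousOn
  have hDcont : ContinuousOn D V :=
    ContinuousLinearMap.continuous_det.comp_continuousOn
      (hfV.continuousOn_fderiv_of_isOpen hVo le_rfl)
  -- the regular set
  set W : Set (Fin n → ℝ) := {x ∈ G | D x ≠ 0} with hWdef
  have hWG : W ⊆ G := fun x hx => hx.1
  have hWo : IsOpen W := by
    have : W = G ∩ D ⁻¹' ({0}ᶜ) := by
      ext x; exact ⟨fun h => ⟨h.1, h.2⟩, fun h => ⟨h.1, h.2⟩⟩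
    rw [this]
    exact (hDcont.mono hGV').isOpen_inter_preimage hG isOpen_compl_singleton
  -- local injectivity with constant sign of the Jacobian
  have key : ∀ x ∈ W, ∃ U : Set (Fin n → ℝ), x ∈ U ∧ IsOpen U ∧ U ⊆ W ∧ InjOn f U ∧
      ((∀ z ∈ U, 0 < D z) ∨ (∀ z ∈ U, D z < 0)) := by
    intro x hx
    have hxV : x ∈ V := hGV' (hWG hx)
    have hstrict : HasStrictFDerivAt f (fderiv ℝ f x) x :=
      (hfV.contDiffAt (hVo.mem_nhds hxV)).hasStrictFDerivAt one_ne_zero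
    set e := (fderiv ℝ f x).toContinuousLinearEquivOfDetNeZero hx.2 with hedef
    have hcoe : (e : (Fin n → ℝ) →L[ℝ] (Fin n → ℝ)) = fderiv ℝ f x :=
      ContinuousLinearMap.coe_toContinuousLinearEquivOfDetNeZero _ _
    have hstrict' : HasStrictFDerivAt f (e : (Fin n → ℝ) →L[ℝ] (Fin n → ℝ)) x := by rw [hcoe]; exact hstrict
    set Φ := hstrict'.toOpenPartialHomeomorph f with hΦdef
    have hΦsrc : x ∈ Φ.source := hstrict'.mem_toOpenPartialHomeomorph_source
    have hΦinj : InjOn f Φ.source := by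
      have := Φ.injOn
      rwa [hstrict'.toOpenPartialHomeomorph_coe] at this
    -- sign neighbourhood
    have hDat : ContinuousAt D x := hDcont.continuousAt (hVo.mem_nhds hxV)
    have hsgn : ∃ U₁ : Set (Fin n → ℝ), x ∈ U₁ ∧ IsOpen U₁ ∧
        ((∀ z ∈ U₁, 0 < D z) ∨ (∀ z ∈ U₁, D z < 0)) := by
      rcases hx.2.lt_or_gt with hneg | hpos
      · have hev : ∀ᶠ z in nhds x, D z ∈ Set.Iio (0 : ℝ) := hDat (Iio_mem_nhds hneg)
        obtain ⟨U₁, hU₁sub, hU₁o, hxU₁⟩ := eventually_nhds_iff.1 hev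
        exact ⟨U₁, hxU₁, hU₁o, Or.inr fun z hz => hU₁sub z hz⟩
      · have hev : ∀ᶠ z in nhds x, D z ∈ Set.Ioi (0 : ℝ) := hDat (Ioi_mem_nhds hpos)
        obtain ⟨U₁, hU₁sub, hU₁o, hxU₁⟩ := eventually_nhds_iff.1 hev
        exact ⟨U₁, hxU₁, hU₁o, Or.inl fun z hz => hU₁sub z hz⟩
    obtain ⟨U₁, hxU₁, hU₁o, hU₁sgn⟩ := hsgn
    refine ⟨Φ.source ∩ U₁ ∩ W, ⟨⟨hΦsrc, hxU₁⟩, hx⟩,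
      ((Φ.open_source.inter hU₁o).inter hWo), inter_subset_right, hΦinj.mono ?_, ?_⟩
    · exact (inter_subset_left.trans inter_subset_left)
    · rcases hU₁sgn with h | h
      · exact Or.inl fun z hz => h z hz.1.2
      · exact Or.inr fun z hz => h z hz.1.2
  -- countable cover of W
  obtain ⟨u, hu_open, hu_sub, hu_inj, hu_sign, hu_union⟩ :
      ∃ u : ℕ → Set (Fin n → ℝ), (∀ k, IsOpen (u k)) ∧ (∀ k, u k ⊆ W) ∧ (∀ k, InjOn f (u k)) ∧
        (∀ k, (∀ z ∈ u k, 0 < D z) ∨ (∀ z ∈ u k, D z < 0)) ∧ ⋃ k, u k = W := by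
    choose U hxU hUo hUW hUinj hUsign using key
    by_cases hWne : W.Nonempty
    · obtain ⟨T, hTc, hTU⟩ := TopologicalSpace.isOpen_iUnion_countable
        (fun x : W => U x x.2) (fun x => hUo x x.2)
      have hcover : ⋃ x : W, U x x.2 = W := by
        apply Subset.antisymm
        · exact iUnion_subset fun x => hUW x x.2
        · exact fun x hx => mem_iUnion.2 ⟨⟨x, hx⟩, hxU x hx⟩
      by_cases hTne : T.Nonempty
      · obtain ⟨g, hg⟩ := hTc.exists_eq_range hTne
        refine ⟨fun k => U (g k) (g k).2, fun k => hUo _ _, fun k => hUW _ _,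
          fun k => hUinj _ _, fun k => hUsign _ _, ?_⟩
        have : ⋃ k, U (g k) (g k).2 = ⋃ x ∈ T, U x x.2 := by
          rw [hg, biUnion_range]
        rw [this, hTU, hcover]
      · exfalso
        rw [not_nonempty_iff_eq_empty] at hTne
        obtain ⟨x, hx⟩ := hWne
        have : x ∈ ⋃ x : W, U x x.2 := by rw [hcover]; exact hx
        rw [← hTU, hTne] at this
        simpa using this
    · rw [not_nonempty_iff_eq_empty] at hWne
      exact ⟨fun _ => ∅, fun _ => isOpen_empty, fun _ => empty_subset _,
        fun _ => injOn_empty f, fun _ => Or.inl fun z hz => absurd hz (notMem_empty z),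
        by simp [hWne]⟩
  -- disjointify
  set A : ℕ → Set (Fin n → ℝ) := disjointed u with hAdef
  have hA_sub : ∀ k, A k ⊆ u k := disjointed_subset u
  have hA_meas : ∀ k, MeasurableSet (A k) :=
    MeasurableSet.disjointed fun k => (hu_open k).measurableSet
  have hA_disj : Pairwise (Function.onFun Disjoint A) := disjoint_disjointed u
  have hA_union : ⋃ k, A k = W := by rw [hAdef, iUnion_disjointed]; exact hu_union
  have hA_W : ∀ k, A k ⊆ W := fun k => (hA_sub k).trans (hu_sub k)
  have hA_V : ∀ k, A k ⊆ V := fun k => ((hA_W k).trans hWG).trans hGV'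
  have hA_inj : ∀ k, InjOn f (A k) := fun k => (hu_inj k).mono (hA_sub k)
  -- signs
  set ε : ℕ → ℝ := fun k => if ∀ z ∈ u k, 0 < D z then 1 else -1 with hεdef
  have hsign : ∀ k, ∀ z ∈ u k, D z = ε k * |D z| := by
    intro k z hz
    by_cases h : ∀ z ∈ u k, 0 < D z
    · simp only [hεdef, if_pos h, one_mul]
      exact (abs_of_pos (h z hz)).symm
    · have hneg := (hu_sign k).resolve_left h
      simp only [hεdef, if_neg h]
      rw [abs_of_neg (hneg z hz)]; ring
  have hsigncast : ∀ k, ∀ z ∈ u k, ((SignType.sign (D z) : ℤ) : ℝ) = ε k := by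
    intro k z hz
    by_cases h : ∀ z ∈ u k, 0 < D z
    · simp only [hεdef, if_pos h]
      rw [sign_pos (h z hz)]; norm_num
    · have hneg := (hu_sign k).resolve_left h
      simp only [hεdef, if_neg h]
      rw [sign_neg (hneg z hz)]; norm_num
  have hε_abs : ∀ k, |ε k| = 1 := by
    intro k
    by_cases h : ∀ z ∈ u k, 0 < D z
    · simp only [hεdef, if_pos h]; norm_num
    · simp only [hεdef, if_neg h]; norm_num
  -- measurability of images
  have hFA : ∀ k, MeasurableSet (f '' A k) := fun k =>
    measurable_image_of_fderivWithin (hA_meas k) (hder (A k) (hA_V k)) (hA_inj k)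
  -- boundedness of D on closure G
  have hGc : IsCompact (closure G) := hGb.isCompact_closure
  obtain ⟨C₀, hC₀⟩ : ∃ C, ∀ x ∈ closure G, ‖D x‖ ≤ C :=
    hGc.exists_bound_of_continuousOn (hDcont.mono hGV)
  set C : ℝ := max C₀ 0 with hCdef
  have hC : ∀ x ∈ closure G, ‖D x‖ ≤ C := fun x hx => (hC₀ x hx).trans (le_max_left _ _)
  have hC0 : 0 ≤ C := le_max_right _ _
  have hGfin : volume G < ⊤ := hGb.measure_lt_top
  -- integrability of the left-hand integrand
  have hfae : AEMeasurable f (volume.restrict G) :=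
    (hfcont.mono hGV').aemeasurable hG.measurableSet
  have hDae : AEMeasurable D (volume.restrict G) :=
    (hDcont.mono hGV').aemeasurable hG.measurableSet
  have hhae : AEStronglyMeasurable (fun x => D x * ψ (f x)) (volume.restrict G) :=
    (hDae.mul (hψm.comp_aemeasurable hfae)).aestronglyMeasurable
  have hint : IntegrableOn (fun x => D x * ψ (f x)) G volume := by
    refine ⟨hhae, HasFiniteIntegral.restrict_of_bounded (C := C * M) hGfin ?_⟩
    refine (ae_restrict_iff' hG.measurableSet).2 (Filter.Eventually.of_forall fun x hx => ?_)
    rw [norm_mul]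
    exact mul_le_mul (hC x (subset_closure hx)) (by rw [Real.norm_eq_abs]; exact hM _)
      (norm_nonneg _) hC0
  -- Step 1 : reduce from G to the regular set W
  have hsplit : ∫ x in G, D x * ψ (f x) ∂volume = ∫ x in W, D x * ψ (f x) ∂volume := by
    have h1 : (∫ x in G ∩ W, D x * ψ (f x) ∂volume) + ∫ x in G \ W, D x * ψ (f x) ∂volume
        = ∫ x in G, D x * ψ (f x) ∂volume := integral_inter_add_diff hWo.measurableSet hint
    have h2 : ∫ x in G \ W, D x * ψ (f x) ∂volume = 0 := by
      apply setIntegral_eq_zero_of_forall_eq_zero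
      intro x hx
      have hD0 : D x = 0 := by
        by_contra h0
        exact hx.2 ⟨hx.1, h0⟩
      rw [hD0, zero_mul]
    rw [← h1, h2, add_zero, inter_eq_self_of_subset_right hWG]
  -- Step 2 : decompose W into the disjoint pieces
  have hWsplit : ∫ x in W, D x * ψ (f x) ∂volume
      = ∑' k, ∫ x in A k, D x * ψ (f x) ∂volume := by
    rw [← hA_union]
    exact integral_iUnion hA_meas hA_disj (by rw [hA_union]; exact hint.mono_set hWG)
  -- Step 3 : change of variables on each piece
  have hpiece : ∀ k, ∫ x in A k, D x * ψ (f x) ∂volume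
      = ∫ y, ε k * (f '' A k).indicator ψ y ∂volume := by
    intro k
    have hcov := integral_image_eq_integral_abs_det_fderiv_smul volume (hA_meas k)
      (hder (A k) (hA_V k)) (hA_inj k) ψ
    have h1 : ∫ x in A k, D x * ψ (f x) ∂volume
        = ∫ x in A k, ε k * (|D x| * ψ (f x)) ∂volume := by
      apply setIntegral_congr_fun (hA_meas k)
      intro x hx
      dsimp only
      conv_lhs => rw [hsign k x (hA_sub k hx)]
      rw [mul_assoc]
    have h3 : ∫ x in A k, |D x| * ψ (f x) ∂volume = ∫ y in f '' A k, ψ y ∂volume := by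
      rw [hcov]
      simp only [smul_eq_mul]
      rfl
    calc ∫ x in A k, D x * ψ (f x) ∂volume
        = ∫ x in A k, ε k * (|D x| * ψ (f x)) ∂volume := h1
      _ = ε k * ∫ x in A k, |D x| * ψ (f x) ∂volume := integral_const_mul _ _
      _ = ε k * ∫ y in f '' A k, ψ y ∂volume := by rw [h3]
      _ = ε k * ∫ y, (f '' A k).indicator ψ y ∂volume := by rw [integral_indicator (hFA k)]
      _ = ∫ y, ε k * (f '' A k).indicator ψ y ∂volume := (integral_const_mul _ _).symm
  -- measurability and summability for the interchange
  have hTmeas : ∀ k : ℕ, AEStronglyMeasurable (fun y => ε k * (f '' A k).indicator ψ y) volume :=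
    fun k => (measurable_const.mul (hψm.indicator (hFA k))).aestronglyMeasurable
  have himage_vol : ∀ k, volume (f '' A k) = ∫⁻ x in A k, ENNReal.ofReal |D x| ∂volume :=
    fun k => (lintegral_abs_det_fderiv_eq_addHaar_image volume (hA_meas k)
      (hder (A k) (hA_V k)) (hA_inj k)).symm
  have hsum_vol : ∑' k, volume (f '' A k) ≤ ENNReal.ofReal C * volume G := by
    calc ∑' k, volume (f '' A k)
        = ∑' k, ∫⁻ x in A k, ENNReal.ofReal |D x| ∂volume := tsum_congr himage_vol
      _ = ∫⁻ x in ⋃ k, A k, ENNReal.ofReal |D x| ∂volume :=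
          (lintegral_iUnion hA_meas hA_disj _).symm
      _ ≤ ∫⁻ _x in W, ENNReal.ofReal C ∂volume := by
          rw [hA_union]
          refine lintegral_mono_ae ((ae_restrict_iff' hWo.measurableSet).2
            (Filter.Eventually.of_forall fun x hx => ENNReal.ofReal_le_ofReal ?_))
          have := hC x (subset_closure (hWG hx))
          rwa [Real.norm_eq_abs] at this
      _ = ENNReal.ofReal C * volume W := by rw [setLIntegral_const]
      _ ≤ ENNReal.ofReal C * volume G := mul_le_mul_right (measure_mono hWG) _
  have hbound : ∀ k, ∫⁻ y, ‖ε k * (f '' A k).indicator ψ y‖₊ ∂volume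
      ≤ ENNReal.ofReal M * volume (f '' A k) := by
    intro k
    have hptwise : ∀ y, (‖ε k * (f '' A k).indicator ψ y‖₊ : ENNReal)
        ≤ (f '' A k).indicator (fun _ => ENNReal.ofReal M) y := by
      intro y
      by_cases hy : y ∈ f '' A k
      · rw [Set.indicator_of_mem hy, Set.indicator_of_mem hy, ← enorm_eq_nnnorm, ← ofReal_norm]
        apply ENNReal.ofReal_le_ofReal
        rw [norm_mul, Real.norm_eq_abs, Real.norm_eq_abs, hε_abs k, one_mul]
        exact hM _
      · rw [Set.indicator_of_notMem hy, Set.indicator_of_notMem hy, mul_zero]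
        simp
    calc ∫⁻ y, ‖ε k * (f '' A k).indicator ψ y‖₊ ∂volume
        ≤ ∫⁻ y, (f '' A k).indicator (fun _ => ENNReal.ofReal M) y ∂volume :=
          lintegral_mono hptwise
      _ = ∫⁻ _y in f '' A k, ENNReal.ofReal M ∂volume := by
          rw [lintegral_indicator (hFA k)]
      _ = ENNReal.ofReal M * volume (f '' A k) := setLIntegral_const _ _
  have hne : ∑' k, ∫⁻ y, ‖ε k * (f '' A k).indicator ψ y‖₊ ∂volume ≠ ⊤ := by
    apply ne_of_lt
    calc ∑' k, ∫⁻ y, ‖ε k * (f '' A k).indicator ψ y‖₊ ∂volume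
        ≤ ∑' k, ENNReal.ofReal M * volume (f '' A k) := ENNReal.tsum_le_tsum hbound
      _ = ENNReal.ofReal M * ∑' k, volume (f '' A k) := ENNReal.tsum_mul_left
      _ ≤ ENNReal.ofReal M * (ENNReal.ofReal C * volume G) := mul_le_mul_right hsum_vol _
      _ < ⊤ := by
          exact ENNReal.mul_lt_top ENNReal.ofReal_lt_top
            (ENNReal.mul_lt_top ENNReal.ofReal_lt_top hGfin)
  have hswap : ∫ y, (∑' k, ε k * (f '' A k).indicator ψ y) ∂volume
      = ∑' k, ∫ y, ε k * (f '' A k).indicator ψ y ∂volume := integral_tsum hTmeas hne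
  -- Step 5 : identify the sum with the degree almost everywhere
  set Z : Set (Fin n → ℝ) := {x ∈ closure G | D x = 0} with hZdef
  have hZnull : volume (f '' Z) = 0 :=
    addHaar_image_eq_zero_of_det_fderivWithin_eq_zero volume
      (hder Z fun x hx => hGV hx.1) fun x hx => hx.2
  have hmain : ∀ y, y ∉ f '' Z →
      (deg y : ℝ) * ψ y = ∑' k, ε k * (f '' A k).indicator ψ y := by
    intro y hyZ
    by_cases hψy : ψ y = 0
    · simp [hψy, Set.indicator_apply]
    · have h1 : y ∉ f '' frontier G := hψsupp y hψy
      have hreg : ∀ x ∈ closure G, f x = y →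
          LinearMap.det (fderiv ℝ f x).toLinearMap ≠ 0 := by
        intro x hx hfx hdet
        exact hyZ ⟨x, ⟨hx, hdet⟩, hfx⟩
      obtain ⟨S, hS, hdegy⟩ := hdeg y h1 hreg
      have hmemS : ∀ x : Fin n → ℝ, x ∈ S ↔ x ∈ G ∧ f x = y := by
        intro x
        rw [← Finset.mem_coe, hS]
        exact Iff.rfl
      have hSW : ∀ x ∈ S, x ∈ W := by
        intro x hx
        obtain ⟨hxG, hfx⟩ := (hmemS x).1 hx
        exact ⟨hxG, fun h0 => hreg x (subset_closure hxG) hfx h0⟩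
      have hexists : ∀ x ∈ W, ∃ k, x ∈ A k := fun x hx =>
        mem_iUnion.1 (by rw [hA_union]; exact hx)
      set κ : (Fin n → ℝ) → ℕ :=
        fun x => if h : x ∈ W then (hexists x h).choose else 0 with hκdef
      have hκA : ∀ x, ∀ _hx : x ∈ W, x ∈ A (κ x) := by
        intro x hx
        simp only [hκdef, dif_pos hx]
        exact (hexists x hx).choose_spec
      have huniq : ∀ x ∈ W, ∀ k, x ∈ A k → k = κ x := by
        intro x hx k hk
        by_contra hne'
        exact Set.disjoint_left.1 (hA_disj hne') hk (hκA x hx)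
      have hκinj : ∀ x ∈ S, ∀ x' ∈ S, κ x = κ x' → x = x' := by
        intro x hx x' hx' hkk
        have ha1 := hκA x (hSW x hx)
        have ha2 := hκA x' (hSW x' hx')
        rw [hkk] at ha1
        refine hu_inj (κ x') (hA_sub _ ha1) (hA_sub _ ha2) ?_
        rw [((hmemS x).1 hx).2, ((hmemS x').1 hx').2]
      have hzero : ∀ k ∉ S.image κ, ε k * (f '' A k).indicator ψ y = 0 := by
        intro k hk
        have hynot : y ∉ f '' A k := by
          rintro ⟨x', hx'A, hfx'⟩
          have hx'W : x' ∈ W := hA_W k hx'A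
          have hx'S : x' ∈ S := (hmemS x').2 ⟨hWG hx'W, hfx'⟩
          exact hk (Finset.mem_image.2 ⟨x', hx'S, (huniq x' hx'W k hx'A).symm⟩)
        rw [Set.indicator_of_notMem hynot, mul_zero]
      rw [tsum_eq_sum hzero, Finset.sum_image hκinj]
      have hterm : ∀ x ∈ S, ε (κ x) * (f '' A (κ x)).indicator ψ y
          = ((SignType.sign (LinearMap.det (fderiv ℝ f x).toLinearMap) : ℤ) : ℝ) * ψ y := by
        intro x hx
        obtain ⟨hxG, hfx⟩ := (hmemS x).1 hx
        have hxW := hSW x hx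
        have hyin : y ∈ f '' A (κ x) := ⟨x, hκA x hxW, hfx⟩
        rw [Set.indicator_of_mem hyin]
        congr 1
        exact (hsigncast (κ x) x (hA_sub _ (hκA x hxW))).symm
      rw [Finset.sum_congr rfl hterm, ← Finset.sum_mul]
      congr 1
      rw [hdegy]
      push_cast
      ring
  have haecongr : ∫ y, (deg y : ℝ) * ψ y ∂volume
      = ∫ y, (∑' k, ε k * (f '' A k).indicator ψ y) ∂volume := by
    apply integral_congr_ae
    have h0 : ∀ᵐ y ∂(volume : Measure (Fin n → ℝ)), y ∉ f '' Z := by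
      rw [ae_iff]
      convert hZnull using 2
      ext y
      simp
    exact h0.mono fun y hy => hmain y hy
  show ∫ x in G, D x * ψ (f x) ∂volume = ∫ y, (deg y : ℝ) * ψ y ∂volume
  rw [hsplit, hWsplit, haecongr, hswap]
  exact tsum_congr hpiece
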